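/- Let M : [r] × [s] × [t] → {0,1} be a three-dimensional binary matrix with al(M) ≤ l, |R(M)| ≤ m and |C(M)| ≤ m. Then |S(M)| ≤ (l-1)(m+1)^2. Here R(M) ⊆ [r-1] is the set of indices i such that M(i,j,k) ≠ M(i+1,j,k) for some (j,k); C(M) ⊆ [s-1] and S(M) ⊆ [t-1] are defined analogously in the second and third coordinates; and al(M) is one plus the maximum number of adjacent unequal pairs along any line of M (a line fixes two of the three coordinates). -/

import Mathlib

/-- Indices `i ∈ [r-1]` with `M(i,j,k) ≠ M(i+1,j,k)` for some `(j,k)`. -/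
def R3 {r s t : ℕ} (M : Fin r → Fin s → Fin t → Bool) : Finset (Fin (r - 1)) :=
  Finset.univ.filter (fun i => ∃ j k,
    M ⟨i.val, by have := i.isLt; omega⟩ j k ≠ M ⟨i.val + 1, by have := i.isLt; omega⟩ j k)

/-- Indices `j ∈ [s-1]` with `M(i,j,k) ≠ M(i,j+1,k)` for some `(i,k)`. -/
def C3 {r s t : ℕ} (M : Fin r → Fin s → Fin t → Bool) : Finset (Fin (s - 1)) :=
  Finset.univ.filter (fun j => ∃ i k,
    M i ⟨j.val, by have := j.isLt; omega⟩ k ≠ M i ⟨j.val + 1, by have := j.isLt; omega⟩ k)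

/-- Indices `k ∈ [t-1]` with `M(i,j,k) ≠ M(i,j,k+1)` for some `(i,j)`. -/
def S3 {r s t : ℕ} (M : Fin r → Fin s → Fin t → Bool) : Finset (Fin (t - 1)) :=
  Finset.univ.filter (fun k => ∃ i j,
    M i j ⟨k.val, by have := k.isLt; omega⟩ ≠ M i j ⟨k.val + 1, by have := k.isLt; omega⟩)

/-- `al(M)`: one plus the maximum number of adjacent unequal pairs along any line
of `M` (a line fixes two of the three coordinates and varies the third). -/
def al3 {r s t : ℕ} (M : Fin r → Fin s → Fin t → Bool) : ℕ :=
  1 + max (max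
    (Finset.univ.sup (fun p : Fin s × Fin t =>
      (Finset.univ.filter (fun i : Fin (r - 1) =>
        M ⟨i.val, by have := i.isLt; omega⟩ p.1 p.2 ≠
          M ⟨i.val + 1, by have := i.isLt; omega⟩ p.1 p.2)).card))
    (Finset.univ.sup (fun p : Fin r × Fin t =>
      (Finset.univ.filter (fun j : Fin (s - 1) =>
        M p.1 ⟨j.val, by have := j.isLt; omega⟩ p.2 ≠
          M p.1 ⟨j.val + 1, by have := j.isLt; omega⟩ p.2)).card)))
    (Finset.univ.sup (fun p : Fin r × Fin s =>
      (Finset.univ.filter (fun k : Fin (t - 1) =>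
        M p.1 p.2 ⟨k.val, by have := k.isLt; omega⟩ ≠
          M p.1 p.2 ⟨k.val + 1, by have := k.isLt; omega⟩)).card))

lemma slab_eq {n : ℕ} {α : Sort*} (f : Fin n → α) (P : Fin (n-1) → Prop) [DecidablePred P]
    (hP : ∀ e : Fin (n-1), ¬ P e →
      f ⟨e.val, by have := e.isLt; omega⟩ = f ⟨e.val + 1, by have := e.isLt; omega⟩)
    (i i' : Fin n)
    (h : (Finset.univ.filter (fun e : Fin (n-1) => P e ∧ e.val < i.val)).card
       = (Finset.univ.filter (fun e : Fin (n-1) => P e ∧ e.val < i'.val)).card) :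
    f i = f i' := by
  set g : ℕ → ℕ := fun a => (Finset.univ.filter (fun e : Fin (n-1) => P e ∧ e.val < a)).card with hg
  have gmono : ∀ a b : ℕ, a ≤ b → g a ≤ g b := by
    intro a b hab
    apply Finset.card_le_card
    intro e he
    simp only [Finset.mem_filter] at he ⊢
    exact ⟨he.1, he.2.1, by omega⟩
  have main : ∀ b : ℕ, ∀ (hb : b < n), ∀ a, ∀ (ha : a ≤ b), g a = g b →
      f ⟨a, by omega⟩ = f ⟨b, hb⟩ := by
    intro b
    induction b with
    | zero => intro hb a ha _; interval_cases a; rfl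
    | succ b ih =>
      intro hb a ha hgab
      rcases Nat.eq_or_lt_of_le ha with rfl | hlt
      · rfl
      · have ha' : a ≤ b := by omega
        have hbn : b < n - 1 := by omega
        have h1 : g a = g b := le_antisymm (gmono _ _ ha')
          (hgab ▸ gmono _ _ (by omega))
        have h2 : g b = g (b+1) := by
          have := gmono b (b+1) (by omega); omega
        have hnP : ¬ P ⟨b, hbn⟩ := by
          intro hp
          have hsub : (Finset.univ.filter (fun e : Fin (n-1) => P e ∧ e.val < b))
              ⊆ (Finset.univ.filter (fun e : Fin (n-1) => P e ∧ e.val < b+1)) := by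
            intro e he
            simp only [Finset.mem_filter] at he ⊢
            exact ⟨he.1, he.2.1, by omega⟩
          have heq := Finset.eq_of_subset_of_card_le hsub (le_of_eq h2.symm)
          have hmem : (⟨b, hbn⟩ : Fin (n-1)) ∈
              Finset.univ.filter (fun e : Fin (n-1) => P e ∧ e.val < b+1) := by
            simp [hp]
          rw [← heq] at hmem
          simp at hmem
        have hstep := hP ⟨b, hbn⟩ hnP
        have hfb : f ⟨a, by omega⟩ = f ⟨b, by omega⟩ := ih (by omega) a ha' (by omega)
        rw [hfb]
        exact hstep
  rcases le_total i.val i'.val with hle | hle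
  · have := main i'.val i'.isLt i.val hle h
    have hi : i = ⟨i.val, by omega⟩ := rfl
    have hi' : i' = ⟨i'.val, i'.isLt⟩ := rfl
    rw [hi, hi']; exact this
  · have := main i.val i.isLt i'.val hle h.symm
    have hi : i = ⟨i.val, i.isLt⟩ := rfl
    have hi' : i' = ⟨i'.val, by omega⟩ := rfl
    rw [hi, hi']; exact this.symm

theorem stmt_14 {r s t : ℕ} (M : Fin r → Fin s → Fin t → Bool) (l m : ℕ)
    (hal : al3 M ≤ l) (hR : (R3 M).card ≤ m) (hC : (C3 M).card ≤ m) :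
    (S3 M).card ≤ (l - 1) * (m + 1) ^ 2 := by
  classical
  set Pr : Fin (r-1) → Prop := fun e => ∃ j k,
    M ⟨e.val, by have := e.isLt; omega⟩ j k ≠ M ⟨e.val + 1, by have := e.isLt; omega⟩ j k with hPr
  set Pc : Fin (s-1) → Prop := fun e => ∃ i k,
    M i ⟨e.val, by have := e.isLt; omega⟩ k ≠ M i ⟨e.val + 1, by have := e.isLt; omega⟩ k with hPc
  set gr : Fin r → ℕ := fun i =>
    (Finset.univ.filter (fun e : Fin (r-1) => Pr e ∧ e.val < i.val)).card with hgr
  set gc : Fin s → ℕ := fun j =>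
    (Finset.univ.filter (fun e : Fin (s-1) => Pc e ∧ e.val < j.val)).card with hgc
  have hrow : ∀ i i' : Fin r, gr i = gr i' → M i = M i' := by
    intro i i' h
    refine slab_eq M Pr ?_ i i' h
    intro e he
    funext j k
    by_contra hc
    exact he ⟨j, k, hc⟩
  have hcol : ∀ j j' : Fin s, gc j = gc j' → ∀ i k, M i j k = M i j' k := by
    intro j j' h i k
    have := slab_eq (fun (j : Fin s) (i : Fin r) (k : Fin t) => M i j k) Pc
      (by intro e he; funext i k; by_contra hc; exact he ⟨i, k, hc⟩) j j' h
    exact congrFun (congrFun this i) k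
  have hgrm : ∀ i, gr i ≤ m := by
    intro i
    refine le_trans (le_trans (Finset.card_le_card ?_) (le_refl (R3 M).card)) hR
    intro e he
    rw [R3, Finset.mem_filter]
    simp only [Finset.mem_filter] at he
    exact ⟨Finset.mem_univ _, he.2.1⟩
  have hgcm : ∀ j, gc j ≤ m := by
    intro j
    refine le_trans (le_trans (Finset.card_le_card ?_) (le_refl (C3 M).card)) hC
    intro e he
    rw [C3, Finset.mem_filter]
    simp only [Finset.mem_filter] at he
    exact ⟨Finset.mem_univ _, he.2.1⟩
  set A : Finset ℕ := Finset.univ.image gr with hA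
  set B : Finset ℕ := Finset.univ.image gc with hB
  set D : ℕ × ℕ → Finset (Fin (t-1)) := fun p =>
    Finset.univ.filter (fun k : Fin (t-1) => ∃ i j, gr i = p.1 ∧ gc j = p.2 ∧
      M i j ⟨k.val, by have := k.isLt; omega⟩ ≠ M i j ⟨k.val + 1, by have := k.isLt; omega⟩)
    with hD
  have hcover : S3 M ⊆ (A ×ˢ B).biUnion D := by
    intro k hk
    rw [S3, Finset.mem_filter] at hk
    obtain ⟨-, i, j, hij⟩ := hk
    rw [Finset.mem_biUnion]
    refine ⟨(gr i, gc j), ?_, ?_⟩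
    · rw [Finset.mem_product]
      exact ⟨Finset.mem_image_of_mem _ (Finset.mem_univ i),
             Finset.mem_image_of_mem _ (Finset.mem_univ j)⟩
    · rw [hD, Finset.mem_filter]
      exact ⟨Finset.mem_univ _, i, j, rfl, rfl, hij⟩
  have hDcard : ∀ p ∈ A ×ˢ B, (D p).card ≤ l - 1 := by
    intro p _
    by_cases hne : (D p).Nonempty
    · obtain ⟨k0, hk0⟩ := hne
      rw [hD, Finset.mem_filter] at hk0
      obtain ⟨-, i0, j0, h1, h2, -⟩ := hk0
      have hsub2 : D p ⊆ Finset.univ.filter (fun k : Fin (t-1) =>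
          M i0 j0 ⟨k.val, by have := k.isLt; omega⟩ ≠
          M i0 j0 ⟨k.val + 1, by have := k.isLt; omega⟩) := by
        intro k hk
        rw [hD, Finset.mem_filter] at hk
        obtain ⟨-, i, j, hi, hj, hne'⟩ := hk
        rw [Finset.mem_filter]
        refine ⟨Finset.mem_univ _, ?_⟩
        have e1 : M i = M i0 := hrow i i0 (hi.trans h1.symm)
        have e2 : ∀ i' k', M i' j k' = M i' j0 k' := hcol j j0 (hj.trans h2.symm)
        rw [e1] at hne'
        rw [e2, e2] at hne'
        exact hne'
      refine le_trans (Finset.card_le_card hsub2) ?_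
      have hls : (Finset.univ.filter (fun k : Fin (t-1) =>
          M i0 j0 ⟨k.val, by have := k.isLt; omega⟩ ≠
          M i0 j0 ⟨k.val + 1, by have := k.isLt; omega⟩)).card ≤
          Finset.univ.sup (fun p : Fin r × Fin s =>
            (Finset.univ.filter (fun k : Fin (t - 1) =>
              M p.1 p.2 ⟨k.val, by have := k.isLt; omega⟩ ≠
                M p.1 p.2 ⟨k.val + 1, by have := k.isLt; omega⟩)).card) :=
        Finset.le_sup (f := fun p : Fin r × Fin s =>
            (Finset.univ.filter (fun k : Fin (t - 1) =>
              M p.1 p.2 ⟨k.val, by have := k.isLt; omega⟩ ≠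
                M p.1 p.2 ⟨k.val + 1, by have := k.isLt; omega⟩)).card)
          (Finset.mem_univ (i0, j0))
      refine le_trans hls ?_
      have : al3 M - 1 ≤ l - 1 := Nat.sub_le_sub_right hal 1
      refine le_trans ?_ this
      rw [al3]
      omega
    · rw [Finset.not_nonempty_iff_eq_empty] at hne
      simp [hne]
  calc (S3 M).card ≤ ((A ×ˢ B).biUnion D).card := Finset.card_le_card hcover
    _ ≤ ∑ p ∈ A ×ˢ B, (D p).card := Finset.card_biUnion_le
    _ ≤ (A ×ˢ B).card * (l - 1) := by
        refine le_trans (Finset.sum_le_card_nsmul _ _ (l-1) hDcard) ?_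
        simp [smul_eq_mul]
    _ ≤ ((m+1) * (m+1)) * (l - 1) := by
        refine Nat.mul_le_mul_right _ ?_
        rw [Finset.card_product]
        have hAc : A.card ≤ m + 1 := by
          refine le_trans (Finset.card_le_card (t := Finset.range (m+1)) ?_) ?_
          · intro a ha
            rw [hA] at ha
            obtain ⟨i, -, rfl⟩ := Finset.mem_image.mp ha
            rw [Finset.mem_range]
            exact Nat.lt_succ_of_le (hgrm i)
          · simp
        have hBc : B.card ≤ m + 1 := by
          refine le_trans (Finset.card_le_card (t := Finset.range (m+1)) ?_) ?_
          · intro a ha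
            rw [hB] at ha
            obtain ⟨j, -, rfl⟩ := Finset.mem_image.mp ha
            rw [Finset.mem_range]
            exact Nat.lt_succ_of_le (hgcm j)
          · simp
        exact Nat.mul_le_mul hAc hBc
    _ = (l - 1) * (m + 1) ^ 2 := by ring
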